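/- Let T be the 3×3 matrix with rows (0,1,2), (1,0,3), (2,3,0) and let B_n = M_n(2,3,1). For every n ≥ 5, the direct sum T ⊕ B_n is product-irregular. -/

import Mathlib

/-- The matrix `M_n(x,y,z)` (1-based indices translated to `Fin n`): zero diagonal,
`x` when `j ≤ n - i + 1` (and `i ≠ j`), `z` at positions `(k,n)` and `(n,k)` where
`k = ⌈n/2⌉ + 1`, and `y` otherwise. -/
def Mmat (n x y z : ℕ) : Matrix (Fin n) (Fin n) ℕ := fun i j =>
  if i = j then 0
  else if (j : ℕ) + 1 ≤ n - (i : ℕ) then x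
  else if (((i : ℕ) + 1 = (n + 1) / 2 + 1 ∧ (j : ℕ) + 1 = n) ∨
           ((i : ℕ) + 1 = n ∧ (j : ℕ) + 1 = (n + 1) / 2 + 1)) then z
  else y

/-- Product of the nonzero entries of row `i`. -/
def rowProd {ι : Type*} [Fintype ι] [DecidableEq ι] (M : Matrix ι ι ℕ) (i : ι) : ℕ :=
  ∏ j ∈ Finset.univ.filter (fun j => M i j ≠ 0), M i j

/-- A square matrix is product-irregular if distinct rows have distinct products of
nonzero entries. -/
def MatPI {ι : Type*} [Fintype ι] [DecidableEq ι] (M : Matrix ι ι ℕ) : Prop :=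
  Function.Injective (rowProd M)

namespace Stmt5Aux

open Finset

/-- Number of entries equal to `2` in row `i` of `Mmat n 2 3 1`. -/
def Af (n i : ℕ) : ℕ := if 2*i < n then n-1-i else n-i

/-- Number of entries equal to `3` in row `i` of `Mmat n 2 3 1`. -/
def Cf (n i : ℕ) : ℕ :=
  if 2*i < n then i else if i = (n+1)/2 ∨ i = n-1 then i-2 else i-1

lemma card_fin_filter (n : ℕ) (p : ℕ → Prop) [DecidablePred p] :
    (univ.filter (fun j : Fin n => p (j:ℕ))).card
      = ((Finset.range n).filter p).card := by
  rw [card_filter, card_filter]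
  exact Fin.sum_univ_eq_sum_range (fun j => if p j then 1 else 0) n

lemma rowProd_eq_prod {ι} [Fintype ι] [DecidableEq ι] (M : Matrix ι ι ℕ) (i : ι) :
    rowProd M i = ∏ j, if M i j = 0 then 1 else M i j := by
  rw [rowProd, prod_filter]
  exact prod_congr rfl fun j _ => by by_cases h : M i j = 0 <;> simp [h]

lemma rowProd_fromBlocks_inl {m k : ℕ} (A : Matrix (Fin m) (Fin m) ℕ)
    (D : Matrix (Fin k) (Fin k) ℕ) (r : Fin m) :
    rowProd (Matrix.fromBlocks A 0 0 D) (Sum.inl r) = rowProd A r := by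
  rw [rowProd_eq_prod, rowProd_eq_prod, Fintype.prod_sum_type]
  simp
  rfl

lemma rowProd_fromBlocks_inr {m k : ℕ} (A : Matrix (Fin m) (Fin m) ℕ)
    (D : Matrix (Fin k) (Fin k) ℕ) (r : Fin k) :
    rowProd (Matrix.fromBlocks A 0 0 D) (Sum.inr r) = rowProd D r := by
  rw [rowProd_eq_prod, rowProd_eq_prod, Fintype.prod_sum_type]
  simp
  rfl

lemma rowProd_pow {k : ℕ} (M : Matrix (Fin k) (Fin k) ℕ) (i : Fin k)
    (h : ∀ j, M i j = 0 ∨ M i j = 1 ∨ M i j = 2 ∨ M i j = 3) :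
    rowProd M i = 2 ^ (univ.filter (fun j => M i j = 2)).card *
                  3 ^ (univ.filter (fun j => M i j = 3)).card := by
  rw [rowProd_eq_prod]
  have h2 : (2:ℕ) ^ (univ.filter (fun j => M i j = 2)).card
      = ∏ j, if M i j = 2 then 2 else 1 := by
    rw [← prod_filter]; simp [prod_const]
  have h3 : (3:ℕ) ^ (univ.filter (fun j => M i j = 3)).card
      = ∏ j, if M i j = 3 then 3 else 1 := by
    rw [← prod_filter]; simp [prod_const]
  rw [h2, h3, ← prod_mul_distrib]
  refine prod_congr rfl fun j _ => ?_
  rcases h j with h0 | h0 | h0 | h0 <;> simp [h0]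

lemma pow23_inj {a b a' b' : ℕ} (h : 2^a*3^b = 2^a'*3^b') : a = a' ∧ b = b' := by
  constructor
  · have h2 := congrArg (fun m => m.factorization 2) h
    simpa [Nat.factorization_mul, Nat.factorization_pow,
      Nat.prime_two.factorization, Nat.prime_three.factorization,
      Finsupp.single_apply, pow_ne_zero] using h2
  · have h3 := congrArg (fun m => m.factorization 3) h
    simpa [Nat.factorization_mul, Nat.factorization_pow,
      Nat.prime_two.factorization, Nat.prime_three.factorization,
      Finsupp.single_apply, pow_ne_zero] using h3

lemma mmat_cases (n : ℕ) (i j : Fin n) :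
    Mmat n 2 3 1 i j = 0 ∨ Mmat n 2 3 1 i j = 1 ∨
    Mmat n 2 3 1 i j = 2 ∨ Mmat n 2 3 1 i j = 3 := by
  unfold Mmat; split_ifs <;> simp

lemma mem2 (n : ℕ) (i j : Fin n) :
    Mmat n 2 3 1 i j = 2 ↔ (¬ (i:ℕ) = (j:ℕ) ∧ (j:ℕ) + 1 ≤ n - (i:ℕ)) := by
  unfold Mmat
  split_ifs with h1 h2 h3 <;> simp_all [Fin.ext_iff]

lemma mem3 (n : ℕ) (i j : Fin n) :
    Mmat n 2 3 1 i j = 3 ↔ (¬ (i:ℕ) = (j:ℕ) ∧ ¬ ((j:ℕ) + 1 ≤ n - (i:ℕ)) ∧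
      ¬ (((i : ℕ) + 1 = (n + 1) / 2 + 1 ∧ (j : ℕ) + 1 = n) ∨
           ((i : ℕ) + 1 = n ∧ (j : ℕ) + 1 = (n + 1) / 2 + 1))) := by
  unfold Mmat
  split_ifs with h1 h2 h3 <;> simp_all [Fin.ext_iff]

lemma card2 (n : ℕ) (i : Fin n) :
    (univ.filter fun j => Mmat n 2 3 1 i j = 2).card = Af n (i:ℕ) := by
  have hi : (i:ℕ) < n := i.isLt
  have e1 : (univ.filter fun j => Mmat n 2 3 1 i j = 2)
      = univ.filter (fun j : Fin n => ¬ (i:ℕ) = (j:ℕ) ∧ (j:ℕ) + 1 ≤ n - (i:ℕ)) :=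
    filter_congr fun j _ => by rw [mem2]
  rw [e1, card_fin_filter n (fun x => ¬ (i:ℕ) = x ∧ x + 1 ≤ n - (i:ℕ))]
  unfold Af
  split_ifs with h1
  · have e2 : (range n).filter (fun x => ¬ (i:ℕ) = x ∧ x + 1 ≤ n - (i:ℕ))
        = (range (n - (i:ℕ))).erase (i:ℕ) := by
      ext x; simp only [mem_filter, mem_range, mem_erase]; omega
    rw [e2, card_erase_of_mem (by simp [mem_range]; omega), card_range]
    omega
  · have e2 : (range n).filter (fun x => ¬ (i:ℕ) = x ∧ x + 1 ≤ n - (i:ℕ))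
        = range (n - (i:ℕ)) := by
      ext x; simp only [mem_filter, mem_range]; omega
    rw [e2, card_range]

lemma card3 (n : ℕ) (hn : 5 ≤ n) (i : Fin n) :
    (univ.filter fun j => Mmat n 2 3 1 i j = 3).card = Cf n (i:ℕ) := by
  have hi : (i:ℕ) < n := i.isLt
  have e1 : (univ.filter fun j => Mmat n 2 3 1 i j = 3)
      = univ.filter (fun j : Fin n => ¬ (i:ℕ) = (j:ℕ) ∧ ¬ ((j:ℕ) + 1 ≤ n - (i:ℕ)) ∧
      ¬ (((i : ℕ) + 1 = (n + 1) / 2 + 1 ∧ (j : ℕ) + 1 = n) ∨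
           ((i : ℕ) + 1 = n ∧ (j : ℕ) + 1 = (n + 1) / 2 + 1))) :=
    filter_congr fun j _ => by rw [mem3]
  rw [e1, card_fin_filter n (fun x => ¬ (i:ℕ) = x ∧ ¬ (x + 1 ≤ n - (i:ℕ)) ∧
      ¬ (((i : ℕ) + 1 = (n + 1) / 2 + 1 ∧ x + 1 = n) ∨
           ((i : ℕ) + 1 = n ∧ x + 1 = (n + 1) / 2 + 1)))]
  unfold Cf
  split_ifs with h1 h2
  · have e2 : (range n).filter (fun x => ¬ (i:ℕ) = x ∧ ¬ (x + 1 ≤ n - (i:ℕ)) ∧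
      ¬ (((i : ℕ) + 1 = (n + 1) / 2 + 1 ∧ x + 1 = n) ∨
           ((i : ℕ) + 1 = n ∧ x + 1 = (n + 1) / 2 + 1)))
        = Finset.Ico (n - (i:ℕ)) n := by
      ext x; simp only [mem_filter, mem_range, Finset.mem_Ico]; omega
    rw [e2, Nat.card_Ico]; omega
  · have e2 : (range n).filter (fun x => ¬ (i:ℕ) = x ∧ ¬ (x + 1 ≤ n - (i:ℕ)) ∧
      ¬ (((i : ℕ) + 1 = (n + 1) / 2 + 1 ∧ x + 1 = n) ∨
           ((i : ℕ) + 1 = n ∧ x + 1 = (n + 1) / 2 + 1)))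
        = ((Finset.Ico (n - (i:ℕ)) n).erase ((n+1)/2)).erase (n-1) := by
      ext x; simp only [mem_filter, mem_range, Finset.mem_Ico, mem_erase]; omega
    rw [e2, card_erase_of_mem, card_erase_of_mem, Nat.card_Ico]
    · omega
    · simp only [Finset.mem_Ico]; omega
    · simp only [mem_erase, Finset.mem_Ico]; omega
  · have e2 : (range n).filter (fun x => ¬ (i:ℕ) = x ∧ ¬ (x + 1 ≤ n - (i:ℕ)) ∧
      ¬ (((i : ℕ) + 1 = (n + 1) / 2 + 1 ∧ x + 1 = n) ∨
           ((i : ℕ) + 1 = n ∧ x + 1 = (n + 1) / 2 + 1)))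
        = (Finset.Ico (n - (i:ℕ)) n).erase (i:ℕ) := by
      ext x; simp only [mem_filter, mem_range, Finset.mem_Ico, mem_erase]; omega
    rw [e2, card_erase_of_mem (by simp only [Finset.mem_Ico]; omega), Nat.card_Ico]
    omega

lemma rowProd_B (n : ℕ) (hn : 5 ≤ n) (i : Fin n) :
    rowProd (Mmat n 2 3 1) i = 2 ^ Af n (i:ℕ) * 3 ^ Cf n (i:ℕ) := by
  rw [rowProd_pow _ i (mmat_cases n i), card2 n i, card3 n hn i]

lemma AC_sum (n : ℕ) (hn : 5 ≤ n) (i : Fin n) : 3 ≤ Af n (i:ℕ) + Cf n (i:ℕ) := by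
  have hi : (i:ℕ) < n := i.isLt
  unfold Af Cf; split_ifs <;> omega

lemma AC_inj (n : ℕ) (hn : 5 ≤ n) (i i' : Fin n)
    (hA : Af n (i:ℕ) = Af n (i':ℕ)) (hC : Cf n (i:ℕ) = Cf n (i':ℕ)) : i = i' := by
  have hi : (i:ℕ) < n := i.isLt
  have hi' : (i':ℕ) < n := i'.isLt
  rw [Fin.ext_iff]
  simp only [Af, Cf] at hA hC
  split_ifs at hA hC <;> omega

lemma T_inj : ∀ r s : Fin 3,
    rowProd (!![0, 1, 2; 1, 0, 3; 2, 3, 0] : Matrix (Fin 3) (Fin 3) ℕ) r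
      = rowProd (!![0, 1, 2; 1, 0, 3; 2, 3, 0] : Matrix (Fin 3) (Fin 3) ℕ) s → r = s := by
  decide

lemma T_le (r : Fin 3) :
    rowProd (!![0, 1, 2; 1, 0, 3; 2, 3, 0] : Matrix (Fin 3) (Fin 3) ℕ) r ≤ 6 := by
  revert r; decide

end Stmt5Aux

open Stmt5Aux in
/-- For every `n ≥ 5`, `T ⊕ B_n` is product-irregular, where `T` is the weighted adjacency
matrix of `K_3` with rows `(0,1,2), (1,0,3), (2,3,0)` and `B_n = M_n(2,3,1)`. -/
theorem stmt_5 (n : ℕ) (hn : 5 ≤ n) :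
    MatPI (Matrix.fromBlocks (!![0, 1, 2; 1, 0, 3; 2, 3, 0] : Matrix (Fin 3) (Fin 3) ℕ)
      0 0 (Mmat n 2 3 1)) := by
  have h8 : ∀ i : Fin n, 8 ≤ rowProd (Mmat n 2 3 1) i := by
    intro i
    rw [rowProd_B n hn i]
    calc (8:ℕ) = 2^3 := rfl
    _ ≤ 2 ^ (Af n (i:ℕ) + Cf n (i:ℕ)) := Nat.pow_le_pow_right (by norm_num) (AC_sum n hn i)
    _ = 2 ^ Af n (i:ℕ) * 2 ^ Cf n (i:ℕ) := pow_add 2 _ _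
    _ ≤ 2 ^ Af n (i:ℕ) * 3 ^ Cf n (i:ℕ) :=
        Nat.mul_le_mul_left _ (Nat.pow_le_pow_left (by norm_num) _)
  intro x y h
  cases x with
  | inl r => cases y with
    | inl s =>
        rw [rowProd_fromBlocks_inl, rowProd_fromBlocks_inl] at h
        exact congrArg Sum.inl (T_inj r s h)
    | inr s =>
        rw [rowProd_fromBlocks_inl, rowProd_fromBlocks_inr] at h
        have h1 := T_le r
        have h2 := h8 s
        omega
  | inr r => cases y with
    | inl s =>
        rw [rowProd_fromBlocks_inr, rowProd_fromBlocks_inl] at h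
        have h1 := T_le s
        have h2 := h8 r
        omega
    | inr s =>
        rw [rowProd_fromBlocks_inr, rowProd_fromBlocks_inr,
          rowProd_B n hn r, rowProd_B n hn s] at h
        obtain ⟨hA, hC⟩ := pow23_inj h
        exact congrArg Sum.inr (AC_inj n hn r s hA hC)
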